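/- Let w_1 ∈ K be deterministic. For 1 ≤ t ≤ T, let p_t be an 𝓕_{t−1}-measurable random variable with values in (0,1], let g_t be an 𝓕_{t−1}-measurable H-valued random vector with ∑_{t=1}^T ‖g_t‖²/p_t integrable, let X_t be a {0,1}-valued 𝓕_t-measurable random variable with ℙ(X_t = 1 | 𝓕_{t−1}) = p_t, and set g̃_t = (X_t/p_t) · g_t. Define the iterates w_{t+1} = Π_K(w_t − η_t g̃_t) with η_t = D/(√2 · √(∑_{τ=1}^t ‖g̃_τ‖²)) whenever the denominator is positive, and w_{t+1} = w_t otherwise. Then for every fixed w* ∈ K, 𝔼[∑_{t=1}^T ⟨g_t, w_t − w*⟩] ≤ √2 · D · 𝔼[√(∑_{t=1}^T ‖g̃_t‖²)] ≤ √2 · D · √(𝔼[∑_{t=1}^T ‖g_t‖²/p_t]). -/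

import Mathlib

open MeasureTheory Finset Filter
open scoped RealInnerProductSpace ENNReal Topology

theorem pullout_nonneg {Ω : Type*} {m mΩ : MeasurableSpace Ω} (hm : m ≤ mΩ)
    {μ : Measure Ω} [IsProbabilityMeasure μ]
    {X h q : Ω → ℝ} (hX : Measurable X) (hX0 : ∀ ω, 0 ≤ X ω) (hX1 : ∀ ω, X ω ≤ 1)
    (hh : StronglyMeasurable[m] h) (hh0 : ∀ ω, 0 ≤ h ω)
    (hq : μ[X | m] =ᵐ[μ] q) (hq0 : ∀ ω, 0 ≤ q ω)
    (hqh_int : Integrable (fun ω => q ω * h ω) μ) :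
    Integrable (fun ω => X ω * h ω) μ ∧
      ∫ ω, X ω * h ω ∂μ = ∫ ω, q ω * h ω ∂μ := by
  have hXint : Integrable X μ := by
    refine Integrable.mono' (integrable_const 1) hX.aestronglyMeasurable ?_
    exact Eventually.of_forall fun ω => by
      rw [Real.norm_eq_abs, abs_of_nonneg (hX0 ω)]; exact hX1 ω
  have hhm : Measurable h := hh.measurable.mono hm le_rfl
  have hq_aesm : AEStronglyMeasurable q μ :=
    (stronglyMeasurable_condExp.mono hm).aestronglyMeasurable.congr hq
  set φ : ℕ → Ω → ℝ := fun n ω => min (h ω) n with hφ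
  have hφ_sm : ∀ n : ℕ, StronglyMeasurable[m] (φ n) :=
    fun n => (hh.measurable.min measurable_const).stronglyMeasurable
  have hφ_nonneg : ∀ (n : ℕ) ω, 0 ≤ φ n ω := fun n ω => le_min (hh0 ω) (Nat.cast_nonneg n)
  have hφ_le_h : ∀ (n : ℕ) ω, φ n ω ≤ h ω := fun n ω => min_le_left _ _
  have hφ_le_n : ∀ (n : ℕ) ω, φ n ω ≤ n := fun n ω => min_le_right _ _
  have hf_nonneg : ∀ (n : ℕ) ω, 0 ≤ (φ n * X) ω := fun n ω =>
    mul_nonneg (hφ_nonneg n ω) (hX0 ω)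
  have hf_int : ∀ n : ℕ, Integrable (φ n * X) μ := by
    intro n
    refine Integrable.mono' (integrable_const (n : ℝ))
      (((hhm.min measurable_const).mul hX).aestronglyMeasurable) ?_
    refine Eventually.of_forall fun ω => ?_
    rw [Real.norm_eq_abs, abs_of_nonneg (hf_nonneg n ω)]
    calc φ n ω * X ω ≤ (n : ℝ) * X ω :=
          mul_le_mul_of_nonneg_right (hφ_le_n n ω) (hX0 ω)
      _ ≤ (n : ℝ) * 1 := mul_le_mul_of_nonneg_left (hX1 ω) (Nat.cast_nonneg n)
      _ = n := mul_one _
  have eqn : ∀ n : ℕ, ∫ ω, (φ n * X) ω ∂μ = ∫ ω, φ n ω * q ω ∂μ := by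
    intro n
    have hpull := condExp_mul_of_stronglyMeasurable_left (hφ_sm n) (hf_int n) hXint
    rw [← integral_condExp hm (f := φ n * X)]
    refine integral_congr_ae ?_
    filter_upwards [hpull, hq] with ω h1 h2
    rw [h1, Pi.mul_apply, h2]
  have hφq_int : ∀ n : ℕ, Integrable (fun ω => φ n ω * q ω) μ := by
    intro n
    refine Integrable.mono' hqh_int
      (((hhm.min measurable_const).aestronglyMeasurable).mul hq_aesm) ?_
    refine Eventually.of_forall fun ω => ?_
    rw [Real.norm_eq_abs, abs_of_nonneg (mul_nonneg (hφ_nonneg n ω) (hq0 ω)), mul_comm]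
    exact mul_le_mul_of_nonneg_left (hφ_le_h n ω) (hq0 ω)
  have hφq_le : ∀ n : ℕ, ∫ ω, φ n ω * q ω ∂μ ≤ ∫ ω, q ω * h ω ∂μ := by
    intro n
    refine integral_mono (hφq_int n) hqh_int fun ω => ?_
    rw [mul_comm]
    exact mul_le_mul_of_nonneg_left (hφ_le_h n ω) (hq0 ω)
  -- monotonicity and pointwise convergence
  have hmono : ∀ ω, Monotone fun n : ℕ => (φ n * X) ω := by
    intro ω i j hij
    exact mul_le_mul_of_nonneg_right
      (min_le_min le_rfl (Nat.cast_le.2 hij)) (hX0 ω)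
  have htends : ∀ ω, Tendsto (fun n : ℕ => (φ n * X) ω) atTop (𝓝 (h ω * X ω)) := by
    intro ω
    have hev : (fun _ : ℕ => h ω * X ω) =ᶠ[atTop] fun n : ℕ => (φ n * X) ω := by
      filter_upwards [eventually_ge_atTop ⌈h ω⌉₊] with n hn
      have : h ω ≤ (n : ℝ) := (Nat.le_ceil _).trans (Nat.cast_le.2 hn)
      simp only [Pi.mul_apply, hφ, min_eq_left this]
    exact Tendsto.congr' hev tendsto_const_nhds
  -- integrability of the limit via monotone convergence (lintegral)
  have hhX_meas : Measurable fun ω => h ω * X ω := hhm.mul hX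
  have hint_limit : Integrable (fun ω => h ω * X ω) μ := by
    refine ⟨hhX_meas.aestronglyMeasurable, ?_⟩
    rw [hasFiniteIntegral_iff_ofReal
      (Eventually.of_forall fun ω => mul_nonneg (hh0 ω) (hX0 ω))]
    have hpt : ∀ ω, ENNReal.ofReal (h ω * X ω)
        = ⨆ n : ℕ, ENNReal.ofReal ((φ n * X) ω) := fun ω =>
      (tendsto_nhds_unique
        (tendsto_atTop_iSup fun i j hij => ENNReal.ofReal_le_ofReal (hmono ω hij))
        (ENNReal.tendsto_ofReal (htends ω))).symm
    rw [lintegral_congr hpt]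
    have hswap := lintegral_iSup (μ := μ)
      (f := fun (n : ℕ) ω => ENNReal.ofReal ((φ n * X) ω))
      (fun n => ((hhm.min measurable_const).mul hX).ennreal_ofReal)
      (fun i j hij ω => ENNReal.ofReal_le_ofReal (hmono ω hij))
    rw [hswap]
    refine lt_of_le_of_lt (iSup_le fun n => ?_)
      (ENNReal.ofReal_lt_top (r := ∫ ω, q ω * h ω ∂μ))
    rw [← ofReal_integral_eq_lintegral_ofReal (hf_int n)
      (Eventually.of_forall (hf_nonneg n))]
    exact ENNReal.ofReal_le_ofReal ((eqn n).le.trans (hφq_le n))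
  -- limit equality via monotone convergence (Bochner)
  have hqh_int' : Integrable (fun ω => h ω * q ω) μ :=
    hqh_int.congr (Eventually.of_forall fun ω => mul_comm _ _)
  have hmono2 : ∀ ω, Monotone fun n : ℕ => φ n ω * q ω := by
    intro ω i j hij
    exact mul_le_mul_of_nonneg_right (min_le_min le_rfl (Nat.cast_le.2 hij)) (hq0 ω)
  have htends2 : ∀ ω, Tendsto (fun n : ℕ => φ n ω * q ω) atTop (𝓝 (h ω * q ω)) := by
    intro ω
    have hev : (fun _ : ℕ => h ω * q ω) =ᶠ[atTop] fun n : ℕ => φ n ω * q ω := by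
      filter_upwards [eventually_ge_atTop ⌈h ω⌉₊] with n hn
      have : h ω ≤ (n : ℝ) := (Nat.le_ceil _).trans (Nat.cast_le.2 hn)
      simp only [hφ, min_eq_left this]
    exact Tendsto.congr' hev tendsto_const_nhds
  have hlim1 : Tendsto (fun n : ℕ => ∫ ω, (φ n * X) ω ∂μ) atTop
      (𝓝 (∫ ω, h ω * X ω ∂μ)) :=
    integral_tendsto_of_tendsto_of_monotone hf_int hint_limit
      (Eventually.of_forall hmono) (Eventually.of_forall htends)
  have hlim2 : Tendsto (fun n : ℕ => ∫ ω, (φ n * X) ω ∂μ) atTop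
      (𝓝 (∫ ω, h ω * q ω ∂μ)) := by
    have := integral_tendsto_of_tendsto_of_monotone hφq_int hqh_int'
      (Eventually.of_forall hmono2) (Eventually.of_forall htends2)
    refine Tendsto.congr (fun n => (eqn n).symm) this
  have hkey : ∫ ω, h ω * X ω ∂μ = ∫ ω, h ω * q ω ∂μ :=
    tendsto_nhds_unique hlim1 hlim2
  constructor
  · exact hint_limit.congr (Eventually.of_forall fun ω => mul_comm _ _)
  · calc ∫ ω, X ω * h ω ∂μ = ∫ ω, h ω * X ω ∂μ := by simp_rw [mul_comm]
      _ = ∫ ω, h ω * q ω ∂μ := hkey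
      _ = ∫ ω, q ω * h ω ∂μ := by simp_rw [mul_comm]

theorem pullout_signed {Ω : Type*} {m mΩ : MeasurableSpace Ω} (hm : m ≤ mΩ)
    {μ : Measure Ω} [IsProbabilityMeasure μ]
    {X h q : Ω → ℝ} (hX : Measurable X) (hX0 : ∀ ω, 0 ≤ X ω) (hX1 : ∀ ω, X ω ≤ 1)
    (hh : StronglyMeasurable[m] h)
    (hq : μ[X | m] =ᵐ[μ] q) (hq0 : ∀ ω, 0 ≤ q ω)
    (hXabs : Integrable (fun ω => X ω * |h ω|) μ)
    (hqabs : Integrable (fun ω => q ω * |h ω|) μ) :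
    ∫ ω, X ω * h ω ∂μ = ∫ ω, q ω * h ω ∂μ := by
  have hXint : Integrable X μ := by
    refine Integrable.mono' (integrable_const 1) hX.aestronglyMeasurable ?_
    exact Eventually.of_forall fun ω => by
      rw [Real.norm_eq_abs, abs_of_nonneg (hX0 ω)]; exact hX1 ω
  have hhm : Measurable h := hh.measurable.mono hm le_rfl
  have hq_aesm : AEStronglyMeasurable q μ :=
    (stronglyMeasurable_condExp.mono hm).aestronglyMeasurable.congr hq
  set φ : ℕ → Ω → ℝ := fun n ω => max (min (h ω) n) (-(n : ℝ)) with hφ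
  have hφ_sm : ∀ n : ℕ, StronglyMeasurable[m] (φ n) := fun n =>
    ((hh.measurable.min measurable_const).max measurable_const).stronglyMeasurable
  have hφ_m : ∀ n : ℕ, Measurable (φ n) := fun n =>
    (hhm.min measurable_const).max measurable_const
  have hφ_abs_le : ∀ (n : ℕ) ω, |φ n ω| ≤ |h ω| := by
    intro n ω
    rw [abs_le]
    constructor
    · exact le_max_of_le_left (le_min (neg_abs_le _)
        (le_trans (neg_nonpos.2 (abs_nonneg _)) (Nat.cast_nonneg n)))
    · exact max_le ((min_le_left _ _).trans (le_abs_self _))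
        (le_trans (neg_nonpos.2 (Nat.cast_nonneg n)) (abs_nonneg _))
  have hφ_abs_le_n : ∀ (n : ℕ) ω, |φ n ω| ≤ n := by
    intro n ω
    rw [abs_le]
    exact ⟨le_max_right _ _, max_le (min_le_right _ _)
      (le_trans (neg_nonpos.2 (Nat.cast_nonneg n)) (Nat.cast_nonneg n))⟩
  have htends : ∀ ω, Tendsto (fun n : ℕ => φ n ω) atTop (𝓝 (h ω)) := by
    intro ω
    have hev : (fun _ : ℕ => h ω) =ᶠ[atTop] fun n : ℕ => φ n ω := by
      filter_upwards [eventually_ge_atTop ⌈|h ω|⌉₊] with n hn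
      have habs : |h ω| ≤ (n : ℝ) := (Nat.le_ceil _).trans (Nat.cast_le.2 hn)
      have h1 : h ω ≤ (n : ℝ) := (le_abs_self _).trans habs
      have h2 : -(n : ℝ) ≤ h ω := by
        have := neg_abs_le (h ω); linarith
      simp only [hφ, min_eq_left h1, max_eq_left h2]
    exact Tendsto.congr' hev tendsto_const_nhds
  have hfX_int : ∀ n : ℕ, Integrable (φ n * X) μ := by
    intro n
    refine Integrable.mono' (integrable_const (n : ℝ))
      ((hφ_m n).mul hX).aestronglyMeasurable ?_
    refine Eventually.of_forall fun ω => ?_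
    rw [Pi.mul_apply, Real.norm_eq_abs, abs_mul, abs_of_nonneg (hX0 ω)]
    calc |φ n ω| * X ω ≤ (n : ℝ) * X ω :=
          mul_le_mul_of_nonneg_right (hφ_abs_le_n n ω) (hX0 ω)
      _ ≤ (n : ℝ) * 1 := mul_le_mul_of_nonneg_left (hX1 ω) (Nat.cast_nonneg n)
      _ = n := mul_one _
  have eqn : ∀ n : ℕ, ∫ ω, φ n ω * X ω ∂μ = ∫ ω, φ n ω * q ω ∂μ := by
    intro n
    have hpull := condExp_mul_of_stronglyMeasurable_left (hφ_sm n) (hfX_int n) hXint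
    calc ∫ ω, φ n ω * X ω ∂μ = ∫ ω, (φ n * X) ω ∂μ := rfl
      _ = ∫ ω, φ n ω * q ω ∂μ := by
          rw [← integral_condExp hm (f := φ n * X)]
          refine integral_congr_ae ?_
          filter_upwards [hpull, hq] with ω h1 h2
          rw [h1, Pi.mul_apply, h2]
  -- dominated convergence on both sides
  have hlim1 : Tendsto (fun n : ℕ => ∫ ω, φ n ω * X ω ∂μ) atTop
      (𝓝 (∫ ω, h ω * X ω ∂μ)) := by
    refine tendsto_integral_of_dominated_convergence (fun ω => X ω * |h ω|)
      (fun n => ((hφ_m n).mul hX).aestronglyMeasurable) hXabs ?_ ?_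
    · intro n
      refine Eventually.of_forall fun ω => ?_
      rw [Real.norm_eq_abs, abs_mul, abs_of_nonneg (hX0 ω), mul_comm]
      exact mul_le_mul_of_nonneg_left (hφ_abs_le n ω) (hX0 ω)
    · exact Eventually.of_forall fun ω =>
        Tendsto.mul_const (X ω) (htends ω)
  have hlim2 : Tendsto (fun n : ℕ => ∫ ω, φ n ω * q ω ∂μ) atTop
      (𝓝 (∫ ω, h ω * q ω ∂μ)) := by
    refine tendsto_integral_of_dominated_convergence (fun ω => q ω * |h ω|)
      (fun n => ((hφ_m n).aestronglyMeasurable).mul hq_aesm) hqabs ?_ ?_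
    · intro n
      refine Eventually.of_forall fun ω => ?_
      rw [Real.norm_eq_abs, abs_mul, abs_of_nonneg (hq0 ω), mul_comm]
      exact mul_le_mul_of_nonneg_left (hφ_abs_le n ω) (hq0 ω)
    · exact Eventually.of_forall fun ω =>
        Tendsto.mul_const (q ω) (htends ω)
  have hkey : ∫ ω, h ω * X ω ∂μ = ∫ ω, h ω * q ω ∂μ :=
    tendsto_nhds_unique (hlim1.congr fun n => eqn n) hlim2
  calc ∫ ω, X ω * h ω ∂μ = ∫ ω, h ω * X ω ∂μ := by simp_rw [mul_comm]
    _ = ∫ ω, h ω * q ω ∂μ := hkey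
    _ = ∫ ω, q ω * h ω ∂μ := by simp_rw [mul_comm]

theorem sum_div_sqrt (a : ℕ → ℝ) (ha : ∀ t, 0 ≤ a t) (n : ℕ) :
    ∑ t ∈ Icc 1 n, a t / Real.sqrt (∑ τ ∈ Icc 1 t, a τ)
      ≤ 2 * Real.sqrt (∑ t ∈ Icc 1 n, a t) := by
  induction n with
  | zero => simp
  | succ n ih =>
    rw [Finset.sum_Icc_succ_top (by omega : 1 ≤ n + 1),
        Finset.sum_Icc_succ_top (by omega : 1 ≤ n + 1)]
    have hS : 0 ≤ ∑ τ ∈ Icc 1 n, a τ := Finset.sum_nonneg fun t _ => ha t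
    have hS' : 0 ≤ (∑ τ ∈ Icc 1 n, a τ) + a (n + 1) := by linarith [ha (n + 1)]
    set S := ∑ τ ∈ Icc 1 n, a τ
    set S' := S + a (n + 1) with hS'def
    have key : a (n + 1) / Real.sqrt S' + 2 * Real.sqrt S ≤ 2 * Real.sqrt S' := by
      rcases eq_or_lt_of_le hS' with h0 | h0
      · have hSz : S = 0 := by linarith [ha (n + 1)]
        have haz : a (n + 1) = 0 := by linarith
        simp [← h0, hSz, haz]
      · have hσ' : 0 < Real.sqrt S' := Real.sqrt_pos.2 h0
        have hσle : Real.sqrt S ≤ Real.sqrt S' := Real.sqrt_le_sqrt (by linarith [ha (n + 1)])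
        have h1 : Real.sqrt S ^ 2 = S := Real.sq_sqrt hS
        have h2 : Real.sqrt S' ^ 2 = S' := Real.sq_sqrt hS' -- hS' is now <? careful
        rw [div_add' _ _ _ hσ'.ne', div_le_iff₀ hσ']
        nlinarith [sq_nonneg (Real.sqrt S' - Real.sqrt S), Real.sqrt_nonneg S]
    have hsum := Finset.sum_Icc_succ_top (by omega : 1 ≤ n + 1)
      (fun t => a t / Real.sqrt (∑ τ ∈ Icc 1 t, a τ))
    linarith [ih]

section Proj
variable {H : Type*} [NormedAddCommGroup H] [InnerProductSpace ℝ H]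
  {K : Set H} (hKne : K.Nonempty) (hKconvex : Convex ℝ K)
  {proj : H → H} (hproj_mem : ∀ v, proj v ∈ K)
  (hproj_min : ∀ v, ∀ u ∈ K, ‖v - proj v‖ ≤ ‖v - u‖)

include hKne hKconvex hproj_mem hproj_min in
theorem proj_var (v : H) : ∀ u ∈ K, ⟪v - proj v, u - proj v⟫ ≤ 0 := by
  haveI := hKne.to_subtype
  have h1 : ‖v - proj v‖ = ⨅ w : K, ‖v - w‖ := by
    refine le_antisymm (le_ciInf fun u => hproj_min v u u.2) ?_
    have hbdd : BddBelow (Set.range fun w : K => ‖v - w‖) :=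
      ⟨0, by rintro x ⟨u, rfl⟩; exact norm_nonneg _⟩
    exact ciInf_le hbdd ⟨proj v, hproj_mem v⟩
  exact (norm_eq_iInf_iff_real_inner_le_zero hKconvex (hproj_mem v)).1 h1

include hKne hKconvex hproj_mem hproj_min in
theorem proj_lipschitz (a b : H) : ‖proj a - proj b‖ ≤ ‖a - b‖ := by
  have h1 := proj_var hKne hKconvex hproj_mem hproj_min a (proj b) (hproj_mem b)
  have h2 := proj_var hKne hKconvex hproj_mem hproj_min b (proj a) (hproj_mem a)
  set u := proj a - proj b with hu
  have key : ⟪a - b, u⟫ - ⟪u, u⟫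
      = -⟪a - proj a, proj b - proj a⟫ - ⟪b - proj b, proj a - proj b⟫ := by
    simp only [hu, inner_sub_left, inner_sub_right]; ring
  have h3 : ‖u‖ ^ 2 ≤ ⟪a - b, u⟫ := by
    have := real_inner_self_eq_norm_sq u
    linarith [key, h1, h2]
  have h4 := real_inner_le_norm (a - b) u
  rcases (norm_nonneg u).lt_or_eq with h | h
  · nlinarith
  · rw [← h]; exact norm_nonneg _

include hKne hKconvex hproj_mem hproj_min in
theorem proj_contract_sq (v : H) {u : H} (hu : u ∈ K) :
    ‖proj v - u‖ ^ 2 ≤ ‖v - u‖ ^ 2 := by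
  have h1 := proj_var hKne hKconvex hproj_mem hproj_min v u hu
  have e : v - u = (v - proj v) + (proj v - u) := by abel
  rw [e, norm_add_sq_real]
  have : ⟪v - proj v, proj v - u⟫ = -⟪v - proj v, u - proj v⟫ := by
    rw [← inner_neg_right]; congr 1; abel
  nlinarith [norm_nonneg (v - proj v), sq_nonneg ‖v - proj v‖]

omit [InnerProductSpace ℝ H] in
include hproj_min in
theorem proj_fix {u : H} (hu : u ∈ K) : proj u = u := by
  have := hproj_min u u hu
  simp only [sub_self, norm_zero] at this
  have : ‖u - proj u‖ = 0 := le_antisymm this (norm_nonneg _)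
  rw [norm_sub_eq_zero_iff] at this; exact this.symm



include hKne hKconvex hproj_mem hproj_min in
theorem pathwise_regret
    (D : ℝ) (hDpos : 0 < D) (hD : ∀ w ∈ K, ∀ v ∈ K, ‖w - v‖ ≤ D)
    (G : ℕ → H) (v : ℕ → H) (hv1 : v 1 ∈ K)
    (hiter : ∀ t, 1 ≤ t → v (t + 1) =
      proj (v t - (D / (Real.sqrt 2 * Real.sqrt (∑ τ ∈ Icc 1 t, ‖G τ‖ ^ 2))) • G t))
    {wstar : H} (hwstar : wstar ∈ K) (T : ℕ) :
    ∑ t ∈ Icc 1 T, ⟪G t, v t - wstar⟫ ≤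
      Real.sqrt 2 * D * Real.sqrt (∑ t ∈ Icc 1 T, ‖G t‖ ^ 2) := by
  have hvK : ∀ t, 1 ≤ t → v t ∈ K := by
    intro t ht
    induction t, ht using Nat.le_induction with
    | base => exact hv1
    | succ t ht ih => rw [hiter t ht]; exact hproj_mem _
  have hS0 : ∀ n : ℕ, (0:ℝ) ≤ ∑ τ ∈ Icc 1 n, ‖G τ‖ ^ 2 :=
    fun n => Finset.sum_nonneg fun τ _ => sq_nonneg _
  have hSsucc : ∀ n : ℕ, ∑ τ ∈ Icc 1 (n+1), ‖G τ‖ ^ 2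
      = (∑ τ ∈ Icc 1 n, ‖G τ‖ ^ 2) + ‖G (n+1)‖ ^ 2 :=
    fun n => Finset.sum_Icc_succ_top (by omega) _
  have hSmono : ∀ n : ℕ, (∑ τ ∈ Icc 1 n, ‖G τ‖ ^ 2) ≤ ∑ τ ∈ Icc 1 (n+1), ‖G τ‖ ^ 2 := by
    intro n; rw [hSsucc n]; nlinarith [sq_nonneg ‖G (n+1)‖]
  have hrD : ∀ n, 1 ≤ n → ‖v n - wstar‖ ^ 2 ≤ D ^ 2 := by
    intro n hn
    have h1 := hD (v n) (hvK n hn) wstar hwstar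
    nlinarith [norm_nonneg (v n - wstar)]
  have hcpos : (0:ℝ) < Real.sqrt 2 := Real.sqrt_pos.2 (by norm_num)
  have hc2 : Real.sqrt 2 ^ 2 = 2 := Real.sq_sqrt (by norm_num)
  -- step inequality
  have hstep : ∀ t, 1 ≤ t → 0 < Real.sqrt (∑ τ ∈ Icc 1 t, ‖G τ‖ ^ 2) →
      ⟪G t, v t - wstar⟫ ≤
        (‖v t - wstar‖ ^ 2 - ‖v (t+1) - wstar‖ ^ 2)
          * (Real.sqrt 2 * Real.sqrt (∑ τ ∈ Icc 1 t, ‖G τ‖ ^ 2)) / (2*D)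
        + D/(2*Real.sqrt 2) * (‖G t‖ ^ 2 / Real.sqrt (∑ τ ∈ Icc 1 t, ‖G τ‖ ^ 2)) := by
    intro t ht hσ
    set σ := Real.sqrt (∑ τ ∈ Icc 1 t, ‖G τ‖ ^ 2) with hσdef
    set η := D / (Real.sqrt 2 * σ) with hηdef
    have hηpos : 0 < η := div_pos hDpos (mul_pos hcpos hσ)
    have hcontr := proj_contract_sq hKne hKconvex hproj_mem hproj_min
      (v t - η • G t) hwstar
    rw [← hiter t ht] at hcontr
    have hrearr : v t - η • G t - wstar = (v t - wstar) - η • G t := by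
      rw [sub_right_comm]
    have hexp : ‖v t - η • G t - wstar‖ ^ 2
        = ‖v t - wstar‖ ^ 2 - 2*η*⟪G t, v t - wstar⟫ + η ^ 2 * ‖G t‖ ^ 2 := by
      rw [hrearr, norm_sub_sq_real, real_inner_smul_right, real_inner_comm,
        norm_smul, Real.norm_eq_abs, abs_of_nonneg hηpos.le]
      ring
    have hmain : 2*η*⟪G t, v t - wstar⟫
        ≤ ‖v t - wstar‖ ^ 2 - ‖v (t+1) - wstar‖ ^ 2 + η ^ 2 * ‖G t‖ ^ 2 := by
      rw [hexp] at hcontr; linarith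
    have h2η : (0:ℝ) < 2*η := by linarith
    have h1 : ⟪G t, v t - wstar⟫
        ≤ ((‖v t - wstar‖ ^ 2 - ‖v (t+1) - wstar‖ ^ 2) + η ^ 2 * ‖G t‖ ^ 2)/(2*η) := by
      rw [le_div_iff₀ h2η]; nlinarith
    refine h1.trans (le_of_eq ?_)
    rw [hηdef]
    have hD' : D ≠ 0 := hDpos.ne'
    have hσ' : σ ≠ 0 := hσ.ne'
    have hc' : Real.sqrt 2 ≠ 0 := hcpos.ne'
    field_simp
  -- main claim by induction
  have hC : ∀ n : ℕ, ∑ t ∈ Icc 1 n, ⟪G t, v t - wstar⟫ ≤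
      (D ^ 2 - ‖v (n+1) - wstar‖ ^ 2)
        * (Real.sqrt 2 * Real.sqrt (∑ τ ∈ Icc 1 n, ‖G τ‖ ^ 2)) / (2*D)
      + D/(2*Real.sqrt 2)
        * ∑ t ∈ Icc 1 n, ‖G t‖ ^ 2 / Real.sqrt (∑ τ ∈ Icc 1 t, ‖G τ‖ ^ 2) := by
    intro n
    induction n with
    | zero => simp
    | succ n ih =>
      rw [Finset.sum_Icc_succ_top (by omega : 1 ≤ n+1)
          (fun t => ⟪G t, v t - wstar⟫),
        Finset.sum_Icc_succ_top (by omega : 1 ≤ n+1)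
          (fun t => ‖G t‖ ^ 2 / Real.sqrt (∑ τ ∈ Icc 1 t, ‖G τ‖ ^ 2))]
      rcases (Real.sqrt_nonneg (∑ τ ∈ Icc 1 (n+1), ‖G τ‖ ^ 2)).eq_or_lt with hσ0 | hσpos
      · -- degenerate case : everything vanishes
        have hsum0 : ∑ τ ∈ Icc 1 (n+1), ‖G τ‖ ^ 2 = 0 := by
          have h := Real.sqrt_eq_zero'.1 hσ0.symm
          linarith [hS0 (n+1)]
        have hterm0 : ∀ τ ∈ Icc 1 (n+1), ‖G τ‖ ^ 2 = 0 :=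
          (Finset.sum_eq_zero_iff_of_nonneg (fun τ _ => sq_nonneg _)).1 hsum0
        have hG0 : G (n+1) = 0 := by
          have := hterm0 (n+1) (mem_Icc.2 ⟨by omega, le_rfl⟩)
          simpa [pow_eq_zero_iff] using this
        have hsn0 : ∑ τ ∈ Icc 1 n, ‖G τ‖ ^ 2 = 0 :=
          Finset.sum_eq_zero fun τ hτ => hterm0 τ
            (Finset.mem_Icc.2 ⟨(Finset.mem_Icc.1 hτ).1,
              le_trans (Finset.mem_Icc.1 hτ).2 (by omega)⟩)
        rw [hsn0, Real.sqrt_zero] at ih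
        rw [← hσ0, hG0]
        simp only [inner_zero_left, add_zero, norm_zero, ne_eq, OfNat.ofNat_ne_zero,
          not_false_eq_true, zero_pow, zero_div, mul_zero, zero_mul] at *
        linarith
      · have hstepn := hstep (n+1) (by omega) hσpos
        have hle : Real.sqrt (∑ τ ∈ Icc 1 n, ‖G τ‖ ^ 2)
            ≤ Real.sqrt (∑ τ ∈ Icc 1 (n+1), ‖G τ‖ ^ 2) := Real.sqrt_le_sqrt (hSmono n)
        have hr : 0 ≤ D ^ 2 - ‖v (n+1) - wstar‖ ^ 2 := by
          linarith [hrD (n+1) (by omega)]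
        have hA : (D ^ 2 - ‖v (n+1) - wstar‖ ^ 2)
              * (Real.sqrt 2 * Real.sqrt (∑ τ ∈ Icc 1 n, ‖G τ‖ ^ 2)) / (2*D)
            ≤ (D ^ 2 - ‖v (n+1) - wstar‖ ^ 2)
              * (Real.sqrt 2 * Real.sqrt (∑ τ ∈ Icc 1 (n+1), ‖G τ‖ ^ 2)) / (2*D) := by
          gcongr
        have halg : (D ^ 2 - ‖v (n+1) - wstar‖ ^ 2)
              * (Real.sqrt 2 * Real.sqrt (∑ τ ∈ Icc 1 (n+1), ‖G τ‖ ^ 2)) / (2*D)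
            + (‖v (n+1) - wstar‖ ^ 2 - ‖v (n+1+1) - wstar‖ ^ 2)
              * (Real.sqrt 2 * Real.sqrt (∑ τ ∈ Icc 1 (n+1), ‖G τ‖ ^ 2)) / (2*D)
            = (D ^ 2 - ‖v (n+1+1) - wstar‖ ^ 2)
              * (Real.sqrt 2 * Real.sqrt (∑ τ ∈ Icc 1 (n+1), ‖G τ‖ ^ 2)) / (2*D) := by
          ring
        have hdist : D/(2*Real.sqrt 2)
              * ((∑ t ∈ Icc 1 n, ‖G t‖ ^ 2 / Real.sqrt (∑ τ ∈ Icc 1 t, ‖G τ‖ ^ 2))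
                + ‖G (n+1)‖ ^ 2 / Real.sqrt (∑ τ ∈ Icc 1 (n+1), ‖G τ‖ ^ 2))
            = D/(2*Real.sqrt 2)
              * (∑ t ∈ Icc 1 n, ‖G t‖ ^ 2 / Real.sqrt (∑ τ ∈ Icc 1 t, ‖G τ‖ ^ 2))
            + D/(2*Real.sqrt 2)
              * (‖G (n+1)‖ ^ 2 / Real.sqrt (∑ τ ∈ Icc 1 (n+1), ‖G τ‖ ^ 2)) := by
          ring
        linarith
  -- conclusion
  have hfin := hC T
  have hB := sum_div_sqrt (fun t => ‖G t‖ ^ 2) (fun t => sq_nonneg _) T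
  have hσ0 : 0 ≤ Real.sqrt (∑ t ∈ Icc 1 T, ‖G t‖ ^ 2) := Real.sqrt_nonneg _
  have h1 : (D ^ 2 - ‖v (T+1) - wstar‖ ^ 2)
        * (Real.sqrt 2 * Real.sqrt (∑ τ ∈ Icc 1 T, ‖G τ‖ ^ 2)) / (2*D)
      ≤ D ^ 2 * (Real.sqrt 2 * Real.sqrt (∑ τ ∈ Icc 1 T, ‖G τ‖ ^ 2)) / (2*D) := by
    gcongr
    nlinarith [sq_nonneg ‖v (T+1) - wstar‖]
  have h2 : D/(2*Real.sqrt 2)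
        * ∑ t ∈ Icc 1 T, ‖G t‖ ^ 2 / Real.sqrt (∑ τ ∈ Icc 1 t, ‖G τ‖ ^ 2)
      ≤ D/(2*Real.sqrt 2) * (2 * Real.sqrt (∑ t ∈ Icc 1 T, ‖G t‖ ^ 2)) :=
    mul_le_mul_of_nonneg_left hB (by positivity)
  have hD' : D ≠ 0 := hDpos.ne'
  have hc' : Real.sqrt 2 ≠ 0 := hcpos.ne'
  have e1 : D ^ 2 * (Real.sqrt 2 * Real.sqrt (∑ τ ∈ Icc 1 T, ‖G τ‖ ^ 2)) / (2*D)
      = Real.sqrt 2 * D * Real.sqrt (∑ t ∈ Icc 1 T, ‖G t‖ ^ 2) / 2 := by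
    field_simp
  have e2 : D/(2*Real.sqrt 2) * (2 * Real.sqrt (∑ t ∈ Icc 1 T, ‖G t‖ ^ 2))
      = Real.sqrt 2 * D * Real.sqrt (∑ t ∈ Icc 1 T, ‖G t‖ ^ 2) / 2 := by
    rw [div_mul_eq_mul_div, div_eq_div_iff (by positivity) (by norm_num : (2:ℝ) ≠ 0)]
    linear_combination (-2 * D * Real.sqrt (∑ t ∈ Icc 1 T, ‖G t‖ ^ 2)) * hc2
  linarith

end Proj

/-- expected-regret guarantee for adaptive projected descent under
stochastic sub-gradient observation failures with known conditional observation
probabilities `p_t` (here `𝔼[X_t | 𝓕_{t-1}] = p_t` encodes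
`ℙ(X_t = 1 | 𝓕_{t-1}) = p_t` for the `{0,1}`-valued `X_t`). -/
theorem stmt9
    {Ω : Type*} {mΩ : MeasurableSpace Ω} {μ : Measure Ω} [IsProbabilityMeasure μ]
    (𝓕 : Filtration ℕ mΩ)
    {H : Type*} [NormedAddCommGroup H] [InnerProductSpace ℝ H] [CompleteSpace H]
    (K : Set H) (hKne : K.Nonempty) (hKclosed : IsClosed K) (hKconvex : Convex ℝ K)
    (D : ℝ) (hD : ∀ w ∈ K, ∀ v ∈ K, ‖w - v‖ ≤ D)
    (proj : H → H)
    (hproj_mem : ∀ v, proj v ∈ K)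
    (hproj_min : ∀ v, ∀ u ∈ K, ‖v - proj v‖ ≤ ‖v - u‖)
    (T : ℕ) (g : ℕ → Ω → H) (p X : ℕ → Ω → ℝ) (gtld : ℕ → Ω → H)
    (hp_meas : ∀ t ∈ Icc 1 T, Measurable[𝓕 (t - 1)] (p t))
    (hp_range : ∀ t ∈ Icc 1 T, ∀ ω, 0 < p t ω ∧ p t ω ≤ 1)
    (hg_meas : ∀ t ∈ Icc 1 T, StronglyMeasurable[𝓕 (t - 1)] (g t))
    (hg_int : Integrable (fun ω => ∑ t ∈ Icc 1 T, ‖g t ω‖ ^ 2 / p t ω) μ)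
    (hX_meas : ∀ t ∈ Icc 1 T, Measurable[𝓕 t] (X t))
    (hX01 : ∀ t ∈ Icc 1 T, ∀ ω, X t ω = 0 ∨ X t ω = 1)
    (hXcond : ∀ t ∈ Icc 1 T, μ[X t | 𝓕 (t - 1)] =ᵐ[μ] p t)
    (hgtld : ∀ t ω, gtld t ω = (X t ω / p t ω) • g t ω)
    (w : ℕ → Ω → H) (w₁ : H) (hw₁K : w₁ ∈ K) (hw1 : ∀ ω, w 1 ω = w₁)
    (hiter_pos : ∀ t, 1 ≤ t → ∀ ω,
      0 < Real.sqrt (∑ τ ∈ Icc 1 t, ‖gtld τ ω‖ ^ 2) →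
      w (t + 1) ω = proj (w t ω -
        (D / (Real.sqrt 2 * Real.sqrt (∑ τ ∈ Icc 1 t, ‖gtld τ ω‖ ^ 2))) • gtld t ω))
    (hiter_zero : ∀ t, 1 ≤ t → ∀ ω,
      Real.sqrt (∑ τ ∈ Icc 1 t, ‖gtld τ ω‖ ^ 2) = 0 → w (t + 1) ω = w t ω)
    (wstar : H) (hwstar : wstar ∈ K) :
    (∫ ω, (∑ t ∈ Icc 1 T, ⟪g t ω, w t ω - wstar⟫) ∂μ) ≤
        Real.sqrt 2 * D * ∫ ω, Real.sqrt (∑ t ∈ Icc 1 T, ‖gtld t ω‖ ^ 2) ∂μ ∧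
      Real.sqrt 2 * D * (∫ ω, Real.sqrt (∑ t ∈ Icc 1 T, ‖gtld t ω‖ ^ 2) ∂μ) ≤
        Real.sqrt 2 * D *
          Real.sqrt (∫ ω, (∑ t ∈ Icc 1 T, ‖g t ω‖ ^ 2 / p t ω) ∂μ) := by
  -- basic facts
  have hD0 : 0 ≤ D := by
    have := hD w₁ hw₁K w₁ hw₁K; simpa using this
  have hfix : ∀ u ∈ K, proj u = u := fun u hu => proj_fix hproj_min hu
  have hwK : ∀ t, 1 ≤ t → ∀ ω, w t ω ∈ K := by
    intro t ht
    induction t, ht using Nat.le_induction with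
    | base => intro ω; rw [hw1]; exact hw₁K
    | succ t ht ih =>
      intro ω
      rcases (Real.sqrt_nonneg (∑ τ ∈ Icc 1 t, ‖gtld τ ω‖ ^ 2)).eq_or_lt with h0 | h0
      · rw [hiter_zero t ht ω h0.symm]; exact ih ω
      · rw [hiter_pos t ht ω h0]; exact hproj_mem _
  -- degenerate case D = 0
  rcases hD0.eq_or_lt with hD0eq | hDpos
  · have hKsub : ∀ u ∈ K, u = wstar := by
      intro u hu
      have h1 := hD u hu wstar hwstar
      rw [← hD0eq] at h1
      have h2 : ‖u - wstar‖ = 0 := le_antisymm h1 (norm_nonneg _)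
      rwa [norm_sub_eq_zero_iff] at h2
    constructor
    · have hzero : ∀ ω, ∑ t ∈ Icc 1 T, ⟪g t ω, w t ω - wstar⟫ = 0 := by
        intro ω
        refine Finset.sum_eq_zero fun t ht => ?_
        rw [hKsub _ (hwK t (Finset.mem_Icc.1 ht).1 ω), sub_self, inner_zero_right]
      have h0 : (fun ω => ∑ t ∈ Icc 1 T, ⟪g t ω, w t ω - wstar⟫) = fun _ => (0:ℝ) :=
        funext hzero
      rw [h0, integral_zero, ← hD0eq]
      simp
    · rw [← hD0eq]; simp
  -- main case D > 0
  have hgtld_zero : ∀ t ω, 1 ≤ t →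
      Real.sqrt (∑ τ ∈ Icc 1 t, ‖gtld τ ω‖ ^ 2) = 0 → gtld t ω = 0 := by
    intro t ω ht h0
    have hs0 : (0:ℝ) ≤ ∑ τ ∈ Icc 1 t, ‖gtld τ ω‖ ^ 2 :=
      Finset.sum_nonneg fun τ _ => sq_nonneg _
    have hsum0 : ∑ τ ∈ Icc 1 t, ‖gtld τ ω‖ ^ 2 = 0 := by
      have := Real.sqrt_eq_zero'.1 h0
      linarith
    have := (Finset.sum_eq_zero_iff_of_nonneg (fun τ _ => sq_nonneg _)).1 hsum0 t
      (Finset.mem_Icc.2 ⟨ht, le_rfl⟩)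
    simpa [pow_eq_zero_iff] using this
  have hiter' : ∀ t, 1 ≤ t → ∀ ω, w (t + 1) ω = proj (w t ω -
      (D / (Real.sqrt 2 * Real.sqrt (∑ τ ∈ Icc 1 t, ‖gtld τ ω‖ ^ 2))) • gtld t ω) := by
    intro t ht ω
    rcases (Real.sqrt_nonneg (∑ τ ∈ Icc 1 t, ‖gtld τ ω‖ ^ 2)).eq_or_lt with h0 | h0
    · rw [hiter_zero t ht ω h0.symm, hgtld_zero t ω ht h0.symm, smul_zero, sub_zero,
        hfix _ (hwK t ht ω)]
    · exact hiter_pos t ht ω h0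
  -- measurability
  have hm' : ∀ n : ℕ, 𝓕 n ≤ mΩ := fun n => 𝓕.le n
  have hp_m0 : ∀ t ∈ Icc 1 T, Measurable (p t) :=
    fun t ht => (hp_meas t ht).mono (hm' _) le_rfl
  have hX_m0 : ∀ t ∈ Icc 1 T, Measurable (X t) :=
    fun t ht => (hX_meas t ht).mono (hm' _) le_rfl
  have hg_sm0 : ∀ t ∈ Icc 1 T, StronglyMeasurable (g t) :=
    fun t ht => (hg_meas t ht).mono (hm' _)
  have hgtld_smF : ∀ t, 1 ≤ t → t ≤ T → StronglyMeasurable[𝓕 t] (gtld t) := by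
    intro t h1 h2
    have ht' : t ∈ Icc 1 T := Finset.mem_Icc.2 ⟨h1, h2⟩
    have he : gtld t = fun ω => (X t ω / p t ω) • g t ω := funext (hgtld t)
    rw [he]
    exact (((hX_meas t ht').div (((hp_meas t ht').mono
      (𝓕.mono (t.sub_le 1))) le_rfl)).stronglyMeasurable).smul
      ((hg_meas t ht').mono (𝓕.mono (t.sub_le 1)))
  have hgtld_sm0 : ∀ t ∈ Icc 1 T, StronglyMeasurable (gtld t) := by
    intro t ht
    have h := Finset.mem_Icc.1 ht
    exact (hgtld_smF t h.1 h.2).mono (hm' t)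
  have hproj_cont : Continuous proj := by
    have : LipschitzWith 1 proj := LipschitzWith.of_dist_le_mul fun a b => by
      rw [NNReal.coe_one, one_mul, dist_eq_norm, dist_eq_norm]
      exact proj_lipschitz hKne hKconvex hproj_mem hproj_min a b
    exact this.continuous
  have hw_smF : ∀ t, 1 ≤ t → t ≤ T + 1 → StronglyMeasurable[𝓕 (t - 1)] (w t) := by
    intro t h1
    induction t, h1 using Nat.le_induction with
    | base =>
      intro _
      have : w 1 = fun _ => w₁ := funext hw1
      rw [this]; exact stronglyMeasurable_const
    | succ t ht ih =>
      intro h2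
      have hle : t ≤ T := by omega
      have ihm : StronglyMeasurable[𝓕 t] (w t) :=
        (ih (by omega)).mono (𝓕.mono (t.sub_le 1))
      have hgs : StronglyMeasurable[𝓕 t] (gtld t) := hgtld_smF t ht hle
      have hSsm : Measurable[𝓕 t] fun ω => ∑ τ ∈ Icc 1 t, ‖gtld τ ω‖ ^ 2 := by
        refine Finset.measurable_sum _ fun τ hτ => ?_
        have hτ' := Finset.mem_Icc.1 hτ
        exact (((hgtld_smF τ hτ'.1 (le_trans hτ'.2 hle)).mono
          (𝓕.mono hτ'.2)).norm.measurable).pow_const 2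
      have hηm : Measurable[𝓕 t] fun ω =>
          D / (Real.sqrt 2 * Real.sqrt (∑ τ ∈ Icc 1 t, ‖gtld τ ω‖ ^ 2)) :=
        measurable_const.div
          (measurable_const.mul (Real.continuous_sqrt.measurable.comp hSsm))
      have he : w (t + 1) = fun ω => proj (w t ω -
          (D / (Real.sqrt 2 * Real.sqrt (∑ τ ∈ Icc 1 t, ‖gtld τ ω‖ ^ 2))) • gtld t ω) :=
        funext (hiter' t ht)
      have : StronglyMeasurable[𝓕 t] (w (t + 1)) := by
        rw [he]
        exact hproj_cont.comp_stronglyMeasurable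
          (ihm.sub (hηm.stronglyMeasurable.smul hgs))
      simpa [Nat.add_sub_cancel] using this
  have hw_sm0 : ∀ t ∈ Icc 1 T, StronglyMeasurable (w t) := by
    intro t ht
    have h := Finset.mem_Icc.1 ht
    exact (hw_smF t h.1 (by omega)).mono (hm' _)
  -- X range facts
  have hX0 : ∀ t ∈ Icc 1 T, ∀ ω, 0 ≤ X t ω := by
    intro t ht ω; rcases hX01 t ht ω with h | h <;> simp [h]
  have hX1' : ∀ t ∈ Icc 1 T, ∀ ω, X t ω ≤ 1 := by
    intro t ht ω; rcases hX01 t ht ω with h | h <;> simp [h]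
  have hp_pos : ∀ t ∈ Icc 1 T, ∀ ω, 0 < p t ω := fun t ht ω => (hp_range t ht ω).1
  -- basic integrabilities
  have hterm_int : ∀ t ∈ Icc 1 T, Integrable (fun ω => ‖g t ω‖ ^ 2 / p t ω) μ := by
    intro t ht
    refine Integrable.mono' hg_int
      ((((hg_sm0 t ht).norm.measurable.pow_const 2).div (hp_m0 t ht)).aestronglyMeasurable) ?_
    refine Eventually.of_forall fun ω => ?_
    rw [Real.norm_eq_abs, abs_of_nonneg (div_nonneg (sq_nonneg _) (hp_pos t ht ω).le)]
    exact Finset.single_le_sum (f := fun τ => ‖g τ ω‖ ^ 2 / p τ ω)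
      (fun τ hτ => div_nonneg (sq_nonneg _) (hp_pos τ hτ ω).le) ht
  have hgnorm_int : ∀ t ∈ Icc 1 T, Integrable (fun ω => ‖g t ω‖) μ := by
    intro t ht
    have hb : Integrable (fun ω => (1 + ‖g t ω‖ ^ 2 / p t ω) / 2) μ :=
      ((integrable_const 1).add (hterm_int t ht)).div_const 2
    refine Integrable.mono' hb (hg_sm0 t ht).norm.aestronglyMeasurable ?_
    refine Eventually.of_forall fun ω => ?_
    rw [Real.norm_eq_abs, abs_of_nonneg (norm_nonneg _)]
    have h1 : ‖g t ω‖ ^ 2 ≤ ‖g t ω‖ ^ 2 / p t ω := by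
      rw [le_div_iff₀ (hp_pos t ht ω)]
      nlinarith [sq_nonneg ‖g t ω‖, (hp_range t ht ω).2, hp_pos t ht ω]
    nlinarith [sq_nonneg (‖g t ω‖ - 1)]
  -- norm identities for gtld
  have hgtld_norm : ∀ t ∈ Icc 1 T, ∀ ω, ‖gtld t ω‖ = X t ω * (‖g t ω‖ / p t ω) := by
    intro t ht ω
    rw [hgtld, norm_smul, Real.norm_eq_abs,
      abs_of_nonneg (div_nonneg (hX0 t ht ω) (hp_pos t ht ω).le)]
    ring
  have hgtld_sq : ∀ t ∈ Icc 1 T, ∀ ω,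
      ‖gtld t ω‖ ^ 2 = X t ω * (‖g t ω‖ ^ 2 / p t ω ^ 2) := by
    intro t ht ω
    rw [hgtld_norm t ht ω]
    rcases hX01 t ht ω with h | h <;> rw [h] <;> ring
  -- pull-out applications
  have hA1 : ∀ t ∈ Icc 1 T, Integrable (fun ω => ‖gtld t ω‖ ^ 2) μ ∧
      ∫ ω, ‖gtld t ω‖ ^ 2 ∂μ = ∫ ω, ‖g t ω‖ ^ 2 / p t ω ∂μ := by
    intro t ht
    have hsm : StronglyMeasurable[𝓕 (t - 1)] fun ω => ‖g t ω‖ ^ 2 / p t ω ^ 2 :=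
      (((hg_meas t ht).norm.measurable.pow_const 2).div
        ((hp_meas t ht).pow_const 2)).stronglyMeasurable
    have hqh : Integrable (fun ω => p t ω * (‖g t ω‖ ^ 2 / p t ω ^ 2)) μ := by
      refine (hterm_int t ht).congr (Eventually.of_forall fun ω => ?_)
      have hne : p t ω ≠ 0 := (hp_pos t ht ω).ne'
      field_simp
    have hres := pullout_nonneg (hm' (t - 1)) (hX_m0 t ht) (hX0 t ht) (hX1' t ht)
      hsm (fun ω => div_nonneg (sq_nonneg _) (sq_nonneg _)) (hXcond t ht)
      (fun ω => (hp_pos t ht ω).le) hqh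
    constructor
    · exact hres.1.congr (Eventually.of_forall fun ω => (hgtld_sq t ht ω).symm)
    · calc ∫ ω, ‖gtld t ω‖ ^ 2 ∂μ
          = ∫ ω, X t ω * (‖g t ω‖ ^ 2 / p t ω ^ 2) ∂μ :=
            integral_congr_ae (Eventually.of_forall fun ω => hgtld_sq t ht ω)
        _ = ∫ ω, p t ω * (‖g t ω‖ ^ 2 / p t ω ^ 2) ∂μ := hres.2
        _ = ∫ ω, ‖g t ω‖ ^ 2 / p t ω ∂μ := by
            refine integral_congr_ae (Eventually.of_forall fun ω => ?_)
            have hne : p t ω ≠ 0 := (hp_pos t ht ω).ne'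
            show p t ω * (‖g t ω‖ ^ 2 / p t ω ^ 2) = ‖g t ω‖ ^ 2 / p t ω
            field_simp
  have hA2 : ∀ t ∈ Icc 1 T, Integrable (fun ω => X t ω * (‖g t ω‖ / p t ω)) μ := by
    intro t ht
    have hsm : StronglyMeasurable[𝓕 (t - 1)] fun ω => ‖g t ω‖ / p t ω :=
      ((hg_meas t ht).norm.measurable.div (hp_meas t ht)).stronglyMeasurable
    have hqh : Integrable (fun ω => p t ω * (‖g t ω‖ / p t ω)) μ := by
      refine (hgnorm_int t ht).congr (Eventually.of_forall fun ω => ?_)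
      have hne : p t ω ≠ 0 := (hp_pos t ht ω).ne'
      field_simp
    exact (pullout_nonneg (hm' (t - 1)) (hX_m0 t ht) (hX0 t ht) (hX1' t ht)
      hsm (fun ω => div_nonneg (norm_nonneg _) (hp_pos t ht ω).le) (hXcond t ht)
      (fun ω => (hp_pos t ht ω).le) hqh).1
  -- inner-product integrabilities
  have hdist_le : ∀ t ∈ Icc 1 T, ∀ ω, ‖w t ω - wstar‖ ≤ D :=
    fun t ht ω => hD _ (hwK t (Finset.mem_Icc.1 ht).1 ω) wstar hwstar
  have hinner_g_int : ∀ t ∈ Icc 1 T,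
      Integrable (fun ω => ⟪g t ω, w t ω - wstar⟫) μ := by
    intro t ht
    refine Integrable.mono' ((hgnorm_int t ht).const_mul D)
      (((hg_sm0 t ht).inner ((hw_sm0 t ht).sub stronglyMeasurable_const)).aestronglyMeasurable) ?_
    refine Eventually.of_forall fun ω => ?_
    rw [Real.norm_eq_abs]
    calc |⟪g t ω, w t ω - wstar⟫| ≤ ‖g t ω‖ * ‖w t ω - wstar‖ := abs_real_inner_le_norm _ _
      _ ≤ ‖g t ω‖ * D := mul_le_mul_of_nonneg_left (hdist_le t ht ω) (norm_nonneg _)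
      _ = D * ‖g t ω‖ := mul_comm _ _
  have hinner_gtld_int : ∀ t ∈ Icc 1 T,
      Integrable (fun ω => ⟪gtld t ω, w t ω - wstar⟫) μ := by
    intro t ht
    refine Integrable.mono' ((hA2 t ht).const_mul D)
      (((hgtld_sm0 t ht).inner ((hw_sm0 t ht).sub stronglyMeasurable_const)).aestronglyMeasurable) ?_
    refine Eventually.of_forall fun ω => ?_
    rw [Real.norm_eq_abs]
    calc |⟪gtld t ω, w t ω - wstar⟫| ≤ ‖gtld t ω‖ * ‖w t ω - wstar‖ :=
          abs_real_inner_le_norm _ _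
      _ ≤ ‖gtld t ω‖ * D := mul_le_mul_of_nonneg_left (hdist_le t ht ω) (norm_nonneg _)
      _ = D * (X t ω * (‖g t ω‖ / p t ω)) := by rw [hgtld_norm t ht ω]; ring
  -- per-step expectation identity
  have heq_inner : ∀ t ∈ Icc 1 T,
      ∫ ω, ⟪gtld t ω, w t ω - wstar⟫ ∂μ = ∫ ω, ⟪g t ω, w t ω - wstar⟫ ∂μ := by
    intro t ht
    have h1 := Finset.mem_Icc.1 ht
    have hwsm : StronglyMeasurable[𝓕 (t - 1)] (w t) := hw_smF t h1.1 (by omega)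
    have hsm : StronglyMeasurable[𝓕 (t - 1)]
        fun ω => ⟪g t ω, w t ω - wstar⟫ / p t ω :=
      (((hg_meas t ht).inner (hwsm.sub stronglyMeasurable_const)).measurable.div
        (hp_meas t ht)).stronglyMeasurable
    have hb : ∀ ω, |⟪g t ω, w t ω - wstar⟫| ≤ D * ‖g t ω‖ := by
      intro ω
      calc |⟪g t ω, w t ω - wstar⟫| ≤ ‖g t ω‖ * ‖w t ω - wstar‖ :=
            abs_real_inner_le_norm _ _
        _ ≤ ‖g t ω‖ * D := mul_le_mul_of_nonneg_left (hdist_le t ht ω) (norm_nonneg _)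
        _ = D * ‖g t ω‖ := mul_comm _ _
    have habs_le : ∀ ω, |⟪g t ω, w t ω - wstar⟫ / p t ω| ≤ D * ‖g t ω‖ / p t ω := by
      intro ω
      rw [abs_div, abs_of_pos (hp_pos t ht ω)]
      exact div_le_div_of_nonneg_right (hb ω) (hp_pos t ht ω).le
    have hXabs : Integrable (fun ω => X t ω * |⟪g t ω, w t ω - wstar⟫ / p t ω|) μ := by
      refine Integrable.mono' ((hA2 t ht).const_mul D)
        ((((hX_m0 t ht).mul (((((hg_sm0 t ht).inner ((hw_sm0 t ht).sub
          stronglyMeasurable_const)).measurable.div (hp_m0 t ht))).abs)).aestronglyMeasurable)) ?_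
      refine Eventually.of_forall fun ω => ?_
      rw [Real.norm_eq_abs, abs_of_nonneg (mul_nonneg (hX0 t ht ω) (abs_nonneg _))]
      calc X t ω * |⟪g t ω, w t ω - wstar⟫ / p t ω|
          ≤ X t ω * (D * ‖g t ω‖ / p t ω) :=
            mul_le_mul_of_nonneg_left (habs_le ω) (hX0 t ht ω)
        _ = D * (X t ω * (‖g t ω‖ / p t ω)) := by ring
    have hqabs : Integrable (fun ω => p t ω * |⟪g t ω, w t ω - wstar⟫ / p t ω|) μ := by
      refine (hinner_g_int t ht).abs.congr (Eventually.of_forall fun ω => ?_)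
      show |⟪g t ω, w t ω - wstar⟫| = p t ω * |⟪g t ω, w t ω - wstar⟫ / p t ω|
      have hne : p t ω ≠ 0 := (hp_pos t ht ω).ne'
      rw [abs_div, abs_of_pos (hp_pos t ht ω)]
      field_simp
    have hres := pullout_signed (hm' (t - 1)) (hX_m0 t ht) (hX0 t ht) (hX1' t ht)
      hsm (hXcond t ht) (fun ω => (hp_pos t ht ω).le) hXabs hqabs
    calc ∫ ω, ⟪gtld t ω, w t ω - wstar⟫ ∂μ
        = ∫ ω, X t ω * (⟪g t ω, w t ω - wstar⟫ / p t ω) ∂μ := by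
          refine integral_congr_ae (Eventually.of_forall fun ω => ?_)
          show ⟪gtld t ω, w t ω - wstar⟫ = X t ω * (⟪g t ω, w t ω - wstar⟫ / p t ω)
          rw [hgtld, real_inner_smul_left]; ring
      _ = ∫ ω, p t ω * (⟪g t ω, w t ω - wstar⟫ / p t ω) ∂μ := hres
      _ = ∫ ω, ⟪g t ω, w t ω - wstar⟫ ∂μ := by
          refine integral_congr_ae (Eventually.of_forall fun ω => ?_)
          show p t ω * (⟪g t ω, w t ω - wstar⟫ / p t ω) = ⟪g t ω, w t ω - wstar⟫
          have hne : p t ω ≠ 0 := (hp_pos t ht ω).ne'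
          field_simp
  -- pathwise regret bound
  have hpath : ∀ ω, ∑ t ∈ Icc 1 T, ⟪gtld t ω, w t ω - wstar⟫ ≤
      Real.sqrt 2 * D * Real.sqrt (∑ t ∈ Icc 1 T, ‖gtld t ω‖ ^ 2) := by
    intro ω
    refine pathwise_regret hKne hKconvex hproj_mem hproj_min D hDpos hD
      (fun t => gtld t ω) (fun t => w t ω) ?_ ?_ hwstar T
    · show w 1 ω ∈ K
      rw [hw1]; exact hw₁K
    · intro t ht; exact hiter' t ht ω
  -- integrability of the sums
  have hsum_gtld_int : Integrable
      (fun ω => ∑ t ∈ Icc 1 T, ⟪gtld t ω, w t ω - wstar⟫) μ :=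
    integrable_finset_sum _ fun t ht => hinner_gtld_int t ht
  have hS_int : Integrable (fun ω => ∑ t ∈ Icc 1 T, ‖gtld t ω‖ ^ 2) μ :=
    integrable_finset_sum _ fun t ht => (hA1 t ht).1
  have hS_nonneg : ∀ ω, (0:ℝ) ≤ ∑ t ∈ Icc 1 T, ‖gtld t ω‖ ^ 2 :=
    fun ω => Finset.sum_nonneg fun t _ => sq_nonneg _
  have hS_meas : Measurable fun ω => ∑ t ∈ Icc 1 T, ‖gtld t ω‖ ^ 2 :=
    Finset.measurable_sum _ fun t ht => ((hgtld_sm0 t ht).norm.measurable).pow_const 2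
  have hsqrt_int : Integrable
      (fun ω => Real.sqrt (∑ t ∈ Icc 1 T, ‖gtld t ω‖ ^ 2)) μ := by
    refine Integrable.mono' (((integrable_const 1).add hS_int).div_const 2)
      ((Real.continuous_sqrt.measurable.comp hS_meas).aestronglyMeasurable) ?_
    refine Eventually.of_forall fun ω => ?_
    rw [Real.norm_eq_abs, abs_of_nonneg (Real.sqrt_nonneg _)]
    have h1 : Real.sqrt (∑ t ∈ Icc 1 T, ‖gtld t ω‖ ^ 2) ^ 2
        = ∑ t ∈ Icc 1 T, ‖gtld t ω‖ ^ 2 := Real.sq_sqrt (hS_nonneg ω)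
    simp only [Pi.add_apply]
    nlinarith [Real.sqrt_nonneg (∑ t ∈ Icc 1 T, ‖gtld t ω‖ ^ 2),
      sq_nonneg (Real.sqrt (∑ t ∈ Icc 1 T, ‖gtld t ω‖ ^ 2) - 1)]
  -- Part 1
  have part1 : (∫ ω, (∑ t ∈ Icc 1 T, ⟪g t ω, w t ω - wstar⟫) ∂μ) ≤
      Real.sqrt 2 * D * ∫ ω, Real.sqrt (∑ t ∈ Icc 1 T, ‖gtld t ω‖ ^ 2) ∂μ := by
    calc ∫ ω, (∑ t ∈ Icc 1 T, ⟪g t ω, w t ω - wstar⟫) ∂μ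
        = ∑ t ∈ Icc 1 T, ∫ ω, ⟪g t ω, w t ω - wstar⟫ ∂μ :=
          integral_finset_sum _ fun t ht => hinner_g_int t ht
      _ = ∑ t ∈ Icc 1 T, ∫ ω, ⟪gtld t ω, w t ω - wstar⟫ ∂μ :=
          (Finset.sum_congr rfl fun t ht => (heq_inner t ht).symm)
      _ = ∫ ω, (∑ t ∈ Icc 1 T, ⟪gtld t ω, w t ω - wstar⟫) ∂μ :=
          (integral_finset_sum _ fun t ht => hinner_gtld_int t ht).symm
      _ ≤ ∫ ω, Real.sqrt 2 * D * Real.sqrt (∑ t ∈ Icc 1 T, ‖gtld t ω‖ ^ 2) ∂μ :=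
          integral_mono hsum_gtld_int (hsqrt_int.const_mul _) hpath
      _ = Real.sqrt 2 * D * ∫ ω, Real.sqrt (∑ t ∈ Icc 1 T, ‖gtld t ω‖ ^ 2) ∂μ :=
          integral_const_mul _ _
  refine ⟨part1, ?_⟩
  -- Part 2
  have hI0 : 0 ≤ ∫ ω, Real.sqrt (∑ t ∈ Icc 1 T, ‖gtld t ω‖ ^ 2) ∂μ :=
    integral_nonneg fun ω => Real.sqrt_nonneg _
  set I := ∫ ω, Real.sqrt (∑ t ∈ Icc 1 T, ‖gtld t ω‖ ^ 2) ∂μ with hIdef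
  have hvar : I ^ 2 ≤ ∫ ω, (∑ t ∈ Icc 1 T, ‖gtld t ω‖ ^ 2) ∂μ := by
    have hexp : ∀ ω, (Real.sqrt (∑ t ∈ Icc 1 T, ‖gtld t ω‖ ^ 2) - I) ^ 2
        = (∑ t ∈ Icc 1 T, ‖gtld t ω‖ ^ 2)
          - 2 * I * Real.sqrt (∑ t ∈ Icc 1 T, ‖gtld t ω‖ ^ 2) + I ^ 2 := by
      intro ω
      rw [sub_sq, Real.sq_sqrt (hS_nonneg ω)]
      ring
    have hi1 : Integrable (fun ω => (∑ t ∈ Icc 1 T, ‖gtld t ω‖ ^ 2)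
        - 2 * I * Real.sqrt (∑ t ∈ Icc 1 T, ‖gtld t ω‖ ^ 2)) μ :=
      hS_int.sub (hsqrt_int.const_mul (2 * I))
    have hi2 : Integrable (fun ω => 2 * I * Real.sqrt (∑ t ∈ Icc 1 T, ‖gtld t ω‖ ^ 2)) μ :=
      hsqrt_int.const_mul (2 * I)
    have h0 : 0 ≤ ∫ ω, ((∑ t ∈ Icc 1 T, ‖gtld t ω‖ ^ 2)
        - 2 * I * Real.sqrt (∑ t ∈ Icc 1 T, ‖gtld t ω‖ ^ 2) + I ^ 2) ∂μ := by
      refine integral_nonneg fun ω => ?_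
      rw [← hexp ω]; exact sq_nonneg _
    rw [integral_add hi1 (integrable_const _),
      integral_sub hS_int hi2, integral_const_mul, integral_const] at h0
    simp only [measure_univ, probReal_univ, ENNReal.toReal_one, smul_eq_mul, one_mul] at h0
    rw [← hIdef] at h0
    nlinarith [h0]
  have hSeq : ∫ ω, (∑ t ∈ Icc 1 T, ‖gtld t ω‖ ^ 2) ∂μ
      = ∫ ω, (∑ t ∈ Icc 1 T, ‖g t ω‖ ^ 2 / p t ω) ∂μ := by
    rw [integral_finset_sum _ (fun t ht => (hA1 t ht).1),
      integral_finset_sum _ (fun t ht => hterm_int t ht)]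
    exact Finset.sum_congr rfl fun t ht => (hA1 t ht).2
  have hfinal : I ≤ Real.sqrt (∫ ω, (∑ t ∈ Icc 1 T, ‖g t ω‖ ^ 2 / p t ω) ∂μ) := by
    rw [show (∫ ω, (∑ t ∈ Icc 1 T, ‖g t ω‖ ^ 2 / p t ω) ∂μ)
      = ∫ ω, (∑ t ∈ Icc 1 T, ‖gtld t ω‖ ^ 2) ∂μ from hSeq.symm]
    exact Real.le_sqrt_of_sq_le hvar
  exact mul_le_mul_of_nonneg_left hfinal (by positivity)
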